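/- Let A be the lazy renewal matrix. Then (a) the partition of the positive integers into H^(1) = {1}, H^(2) = {even positive integers} and H^(3) = {odd integers ≥ 3} is an A-orthogonal division; (b) every A-orthogonal division for A has at least 3 parts; and (c) every A-orthogonal division for A has at least two infinite parts. Consequently m_A = 3 and P_A = 2 for the lazy renewal matrix. -/

import Mathlib

/-- An `A`-orthogonal division: a partition of the positive integers into `m` parts
`H 0, …, H (m-1)` such that `|ρ_A^{-1}(k) ∩ H l| ≤ 1` for every `k` and every part `l`,
where `ρ_A^{-1}(k) = {j : A(j,k) = 1}`. -/
def IsOrthDiv (A : ℕ+ → ℕ+ → Bool) (m : ℕ) (H : Fin m → Set ℕ+) : Prop :=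
  (∀ x : ℕ+, ∃! l : Fin m, x ∈ H l) ∧
  ∀ (k : ℕ+) (l : Fin m), ({j : ℕ+ | A j k = true} ∩ H l).encard ≤ 1

/-- The lazy renewal matrix: `A(i,j) = 1` iff `i = 1` or `j ∈ {i−1, i}`. -/
def lazyRenewal (i j : ℕ+) : Bool :=
  decide (i = 1 ∨ (j : ℕ) + 1 = (i : ℕ) ∨ j = i)

/-- The division `H⁽¹⁾ = {1}`, `H⁽²⁾ = {even positive integers}`,
`H⁽³⁾ = {odd integers ≥ 3}`. -/
def lazyDiv : Fin 3 → Set ℕ+ :=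
  ![{1}, {x : ℕ+ | (x : ℕ) % 2 = 0}, {x : ℕ+ | (x : ℕ) % 2 = 1 ∧ 3 ≤ (x : ℕ)}]

lemma lr_iff (j k : ℕ+) :
    lazyRenewal j k = true ↔ ((j:ℕ) = 1 ∨ (k:ℕ) + 1 = (j:ℕ) ∨ (k:ℕ) = (j:ℕ)) := by
  unfold lazyRenewal
  rw [decide_eq_true_iff]
  constructor
  · rintro (h | h | h)
    · left; exact_mod_cast congrArg (PNat.val) h
    · right; left; exact h
    · right; right; exact_mod_cast congrArg (PNat.val) h
  · rintro (h | h | h)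
    · left; exact PNat.coe_inj.mp (by simpa using h)
    · right; left; exact h
    · right; right; exact PNat.coe_inj.mp h

lemma key {m : ℕ} {H : Fin m → Set ℕ+} (h : IsOrthDiv lazyRenewal m H) (l : Fin m)
    (k a b : ℕ+) (ha : a ∈ H l) (hb : b ∈ H l)
    (hak : lazyRenewal a k = true) (hbk : lazyRenewal b k = true) : a = b := by
  have h2 := h.2 k l
  rw [Set.encard_le_one_iff] at h2
  exact h2 a b ⟨hak, ha⟩ ⟨hbk, hb⟩

lemma no_consec {m : ℕ} {H : Fin m → Set ℕ+} (h : IsOrthDiv lazyRenewal m H) (l : Fin m)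
    (k : ℕ+) (hk : k ∈ H l) (hk1 : k + 1 ∈ H l) : False := by
  have heq : k = k + 1 := key h l k k (k+1) hk hk1
    (by rw [lr_iff]; right; right; rfl)
    (by rw [lr_iff]; right; left; simp)
  have := congrArg (PNat.val) heq
  simp only [PNat.add_coe, PNat.one_coe] at this
  omega

lemma one_alone {m : ℕ} {H : Fin m → Set ℕ+} (h : IsOrthDiv lazyRenewal m H) (l : Fin m)
    (x : ℕ+) (h1 : 1 ∈ H l) (hx : x ∈ H l) : x = 1 :=
  (key h l x 1 x h1 hx (by rw [lr_iff]; left; rfl)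
    (by rw [lr_iff]; right; right; rfl)).symm

lemma evens_inf : ({x : ℕ+ | (x : ℕ) % 2 = 0} : Set ℕ+).Infinite := by
  refine Set.infinite_of_injective_forall_mem
    (f := fun n : ℕ => (⟨2 * (n+1), by omega⟩ : ℕ+)) ?_ ?_
  · intro a b hab
    have := congrArg (PNat.val) hab
    simp only [PNat.mk_coe] at this
    omega
  · intro n; show (2 * (n+1)) % 2 = 0; omega

lemma odds_inf : ({x : ℕ+ | (x : ℕ) % 2 = 1 ∧ 3 ≤ (x : ℕ)} : Set ℕ+).Infinite := by
  refine Set.infinite_of_injective_forall_mem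
    (f := fun n : ℕ => (⟨2 * n + 3, by omega⟩ : ℕ+)) ?_ ?_
  · intro a b hab
    have := congrArg (PNat.val) hab
    simp only [PNat.mk_coe] at this
    omega
  · intro n; show (2 * n + 3) % 2 = 1 ∧ 3 ≤ 2 * n + 3; exact ⟨by omega, by omega⟩

lemma mem0 (x : ℕ+) : x ∈ lazyDiv 0 ↔ (x:ℕ) = 1 := by
  rw [show lazyDiv 0 = {1} from rfl, Set.mem_singleton_iff]
  exact ⟨fun h => by rw [h]; rfl, fun h => PNat.coe_inj.mp (by simpa using h)⟩

lemma mem1 (x : ℕ+) : x ∈ lazyDiv 1 ↔ (x:ℕ) % 2 = 0 := by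
  simp [lazyDiv, Set.mem_setOf_eq]

lemma mem2 (x : ℕ+) : x ∈ lazyDiv 2 ↔ (x:ℕ) % 2 = 1 ∧ 3 ≤ (x:ℕ) := by
  simp [lazyDiv, Set.mem_setOf_eq]

lemma part_a : IsOrthDiv lazyRenewal 3 lazyDiv := by
  constructor
  · intro x
    have hx1 : 1 ≤ (x:ℕ) := x.one_le
    have uniq : ∀ l : Fin 3, x ∈ lazyDiv l →
        ((l = 0 ∧ (x:ℕ) = 1) ∨ (l = 1 ∧ (x:ℕ) % 2 = 0) ∨
          (l = 2 ∧ (x:ℕ) % 2 = 1 ∧ 3 ≤ (x:ℕ))) := by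
      intro l hl
      fin_cases l
      · exact Or.inl ⟨rfl, (mem0 x).mp hl⟩
      · exact Or.inr (Or.inl ⟨rfl, (mem1 x).mp hl⟩)
      · exact Or.inr (Or.inr ⟨rfl, (mem2 x).mp hl⟩)
    by_cases h1 : (x:ℕ) = 1
    · refine ⟨0, (mem0 x).mpr h1, ?_⟩
      intro l hl
      rcases uniq l hl with ⟨h, _⟩ | ⟨_, h⟩ | ⟨_, h⟩ <;> first | exact h | omega
    · by_cases h2 : (x:ℕ) % 2 = 0
      · refine ⟨1, (mem1 x).mpr h2, ?_⟩
        intro l hl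
        rcases uniq l hl with ⟨_, h⟩ | ⟨h, _⟩ | ⟨_, h⟩ <;> first | exact h | omega
      · refine ⟨2, (mem2 x).mpr ⟨by omega, by omega⟩, ?_⟩
        intro l hl
        rcases uniq l hl with ⟨_, h⟩ | ⟨_, h⟩ | ⟨h, _⟩ <;> first | exact h | omega
  · intro k l
    rw [Set.encard_le_one_iff]
    rintro a b ⟨hak, hal⟩ ⟨hbk, hbl⟩
    rw [Set.mem_setOf_eq, lr_iff] at hak hbk
    rw [← PNat.coe_inj]
    have hk1 : 1 ≤ (k:ℕ) := k.one_le
    fin_cases l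
    · have ha' := (mem0 a).mp hal
      have hb' := (mem0 b).mp hbl
      omega
    · have ha' := (mem1 a).mp hal
      have hb' := (mem1 b).mp hbl
      rcases hak with h | h | h <;> rcases hbk with h' | h' | h' <;> omega
    · obtain ⟨ha1, ha2⟩ := (mem2 a).mp hal
      obtain ⟨hb1, hb2⟩ := (mem2 b).mp hbl
      rcases hak with h | h | h <;> rcases hbk with h' | h' | h' <;> omega

lemma part_b (m : ℕ) (H : Fin m → Set ℕ+) (h : IsOrthDiv lazyRenewal m H) : 3 ≤ m := by
  obtain ⟨l1, hl1, _⟩ := h.1 1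
  obtain ⟨l2, hl2, _⟩ := h.1 2
  obtain ⟨l3, hl3, _⟩ := h.1 3
  have h12 : l1 ≠ l2 := by
    rintro rfl
    exact absurd (congrArg PNat.val (one_alone h l1 2 hl1 hl2)) (by decide)
  have h13 : l1 ≠ l3 := by
    rintro rfl
    exact absurd (congrArg PNat.val (one_alone h l1 3 hl1 hl3)) (by decide)
  have h23 : l2 ≠ l3 := by
    rintro rfl
    exact no_consec h l2 2 hl2 (by convert hl3 using 2; rfl)
  have : 2 < Fintype.card (Fin m) := Fintype.two_lt_card_iff.mpr ⟨l1, l2, l3, h12, h13, h23⟩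
  simp only [Fintype.card_fin] at this; omega

lemma part_c (m : ℕ) (H : Fin m → Set ℕ+) (h : IsOrthDiv lazyRenewal m H) :
    2 ≤ {l : Fin m | (H l).Infinite}.ncard := by
  by_contra hc
  push_neg at hc
  set S := {l : Fin m | (H l).Infinite} with hS
  have hSfin : S.Finite := Set.toFinite S
  have hF : (⋃ l ∈ Sᶜ, H l).Finite := by
    apply Set.Finite.biUnion (Set.toFinite _)
    intro l hl
    exact Set.not_infinite.mp hl
  interval_cases hn : S.ncard
  · have hSempty : S = ∅ := (Set.ncard_eq_zero hSfin).mp hn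
    have huniv : (Set.univ : Set ℕ+).Finite := by
      refine hF.subset ?_
      intro x _
      obtain ⟨l, hl, _⟩ := h.1 x
      exact Set.mem_biUnion (by simp [hSempty]) hl
    exact Set.infinite_univ huniv
  · obtain ⟨l0, hl0⟩ := Set.ncard_eq_one.mp hn
    obtain ⟨b, hb⟩ := hF.bddAbove
    have hblt : b < b + 1 := by
      rw [← PNat.coe_lt_coe]; simp
    have hmem : ∀ x : ℕ+, x ∉ (⋃ l ∈ Sᶜ, H l) → x ∈ H l0 := by
      intro x hx
      obtain ⟨l, hl, _⟩ := h.1 x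
      by_cases hls : l ∈ S
      · rwa [show l = l0 by rw [hl0] at hls; exact hls] at hl
      · exact absurd (Set.mem_biUnion (by simpa using hls) hl) hx
    have hN1 : b + 1 ∈ H l0 := by
      refine hmem _ fun hmem' => ?_
      exact absurd (hb hmem') (not_le.mpr hblt)
    have hN2 : b + 1 + 1 ∈ H l0 := by
      refine hmem _ fun hmem' => ?_
      have : b < b + 1 + 1 := lt_trans hblt (by rw [← PNat.coe_lt_coe]; simp)
      exact absurd (hb hmem') (not_le.mpr this)
    exact no_consec h l0 (b+1) hN1 hN2

/-- for the lazy renewal matrix: (a) the partition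
`{1}, {evens}, {odds ≥ 3}` is an `A`-orthogonal division; (b) every `A`-orthogonal
division has at least `3` parts; (c) every `A`-orthogonal division has at least two
infinite parts.  Consequently `m_A = 3` and `P_A = 2`. -/
theorem stmt13 :
    IsOrthDiv lazyRenewal 3 lazyDiv ∧
    (∀ (m : ℕ) (H : Fin m → Set ℕ+), IsOrthDiv lazyRenewal m H → 3 ≤ m) ∧
    (∀ (m : ℕ) (H : Fin m → Set ℕ+), IsOrthDiv lazyRenewal m H →
      2 ≤ {l : Fin m | (H l).Infinite}.ncard) ∧
    sInf {m : ℕ | ∃ H : Fin m → Set ℕ+, IsOrthDiv lazyRenewal m H} = 3 ∧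
    sInf {p : ℕ | ∃ H : Fin 3 → Set ℕ+, IsOrthDiv lazyRenewal 3 H ∧
      {l : Fin 3 | (H l).Infinite}.ncard = p} = 2 := by

  have hdiv : {l : Fin 3 | (lazyDiv l).Infinite} = {1, 2} := by
    ext l
    fin_cases l
    · simp only [Set.mem_setOf_eq, Set.mem_insert_iff, Set.mem_singleton_iff]
      constructor
      · intro hinf
        exact absurd (Set.finite_singleton (1:ℕ+)) (hinf : (({1} : Set ℕ+)).Infinite)
      · intro h; exact absurd h (by decide)
    · simp only [Set.mem_setOf_eq, Set.mem_insert_iff, Set.mem_singleton_iff]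
      constructor
      · intro _; left; rfl
      · intro _; exact (evens_inf : (lazyDiv 1).Infinite)
    · simp only [Set.mem_setOf_eq, Set.mem_insert_iff, Set.mem_singleton_iff]
      constructor
      · intro _; right; rfl
      · intro _; exact (odds_inf : (lazyDiv 2).Infinite)
  refine ⟨part_a, part_b, part_c, ?_, ?_⟩
  · apply le_antisymm
    · exact Nat.sInf_le ⟨lazyDiv, part_a⟩
    · exact le_csInf ⟨3, ⟨lazyDiv, part_a⟩⟩ (by rintro m ⟨H, hH⟩; exact part_b m H hH)
  · have h2mem : 2 ∈ {p : ℕ | ∃ H : Fin 3 → Set ℕ+, IsOrthDiv lazyRenewal 3 H ∧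
        {l : Fin 3 | (H l).Infinite}.ncard = p} := by
      refine ⟨lazyDiv, part_a, ?_⟩
      rw [hdiv, Set.ncard_pair (by decide)]
    apply le_antisymm
    · exact Nat.sInf_le h2mem
    · exact le_csInf ⟨2, h2mem⟩ (by rintro p ⟨H, hH, rfl⟩; exact part_c 3 H hH)
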